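/- For a tetrahedron T = [A,B,C,D], let α, β, γ, δ be the perimeters of the facets opposite to A, B, C, D respectively, and let J = (αA + βB + γC + δD)/(α+β+γ+δ) be the complementary 1-centroid of T. Then the incenter of T coincides with J if and only if the inradii of the four triangular facets of T are all equal. -/

import Mathlib

/-
Common geometric notions for simplices in Euclidean d-space, following
Edmonds–Hajja–Martini, "Coincidences of simplex centers and related facial
structures".  A d-simplex is given by its d+1 affinely independent vertices
`A : Fin (d+1) → EuclideanSpace ℝ (Fin d)`.
-/

noncomputable section

abbrev Pt (d : ℕ) : Type := EuclideanSpace ℝ (Fin d)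

variable {d : ℕ}

/-- The centroid of the simplex with vertices `A`: the average of the vertices. -/
def ctr (A : Fin (d+1) → Pt d) : Pt d := Finset.centroid ℝ Finset.univ A

/-- `C` is a circumcenter of the simplex with vertices `A`:
it is equidistant from all the vertices. -/
def IsCircumcenter (A : Fin (d+1) → Pt d) (C : Pt d) : Prop :=
  ∃ r : ℝ, ∀ i, dist C (A i) = r

/-- The affine span (hyperplane) of the facet opposite to vertex `j`. -/
def facetSpan (A : Fin (d+1) → Pt d) (j : Fin (d+1)) : Set (Pt d) :=
  (affineSpan ℝ (A '' {i | i ≠ j}) : Set (Pt d))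

/-- `I` is the incenter of the simplex with vertices `A`: an interior point
equidistant from the affine hyperplanes spanned by the facets. -/
def IsIncenter (A : Fin (d+1) → Pt d) (I : Pt d) : Prop :=
  I ∈ interior (convexHull ℝ (Set.range A)) ∧
    ∃ r : ℝ, ∀ j, Metric.infDist I (facetSpan A j) = r

/-- `F` is a Fermat-Torricelli point of the simplex with vertices `A`:
it minimizes the sum of the distances to the vertices. -/
def IsFermatPoint (A : Fin (d+1) → Pt d) (F : Pt d) : Prop :=
  ∀ Q : Pt d, ∑ i, dist F (A i) ≤ ∑ i, dist Q (A i)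

/-- The altitude of the simplex at vertex `j`: the distance from `A j` to the
affine span of the opposite facet. -/
def altitude (A : Fin (d+1) → Pt d) (j : Fin (d+1)) : ℝ :=
  Metric.infDist (A j) (facetSpan A j)

/-- Equiareal: all facets have the same `(d-1)`-dimensional volume; equivalently
(since `d · vol S = facet volume · altitude`), all altitudes are equal. -/
def Equiareal (A : Fin (d+1) → Pt d) : Prop :=
  ∀ j k, altitude A j = altitude A k

/-- `r` is the circumradius of the facet opposite `j`: some point of the affine
span of the facet is at distance `r` from all its vertices. -/
def IsFacetCircumradius (A : Fin (d+1) → Pt d) (j : Fin (d+1)) (r : ℝ) : Prop :=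
  ∃ C ∈ affineSpan ℝ (A '' {i | i ≠ j}), ∀ i, i ≠ j → dist C (A i) = r

/-- Equiradial: all facets have the same circumradius. -/
def Equiradial (A : Fin (d+1) → Pt d) : Prop :=
  ∃ r : ℝ, ∀ j, IsFacetCircumradius A j r

/-- Equifacetal: any two facets are congruent, i.e. there is an isometry of the
ambient space carrying the vertex set of one facet onto that of the other. -/
def Equifacetal (A : Fin (d+1) → Pt d) : Prop :=
  ∀ j k, ∃ f : Pt d ≃ᵢ Pt d, f '' (A '' {i | i ≠ j}) = A '' {i | i ≠ k}

/-- Regular: all edges have equal length. -/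
def Regular (A : Fin (d+1) → Pt d) : Prop :=
  ∀ i j k l, i ≠ j → k ≠ l → dist (A i) (A j) = dist (A k) (A l)

/-- Heron's formula: the area of a triangle with side lengths `x, y, z`. -/
def heronArea (x y z : ℝ) : ℝ :=
  Real.sqrt ((x + y + z) * (-x + y + z) * (x - y + z) * (x + y - z)) / 4

/-- The area of the triangular facet of a tetrahedron opposite vertex `j`. -/
def facetArea (A : Fin 4 → Pt 3) (j : Fin 4) : ℝ :=
  heronArea (dist (A (j.succAbove 0)) (A (j.succAbove 1)))
    (dist (A (j.succAbove 0)) (A (j.succAbove 2)))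
    (dist (A (j.succAbove 1)) (A (j.succAbove 2)))

/-- The perimeter of the triangular facet of a tetrahedron opposite vertex `j`. -/
def facetPerimeter (A : Fin 4 → Pt 3) (j : Fin 4) : ℝ :=
  dist (A (j.succAbove 0)) (A (j.succAbove 1)) +
  dist (A (j.succAbove 0)) (A (j.succAbove 2)) +
  dist (A (j.succAbove 1)) (A (j.succAbove 2))

/-- The inradius of the triangular facet opposite `j`: twice the area divided
by the perimeter. -/
def facetInradius (A : Fin 4 → Pt 3) (j : Fin 4) : ℝ :=
  2 * facetArea A j / facetPerimeter A j

namespace Stmt2Aux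

local notation "⟪" x ", " y "⟫" => @inner ℝ _ _ x y

lemma inner3 (x y : Pt 3) : ⟪x, y⟫ = x 0 * y 0 + x 1 * y 1 + x 2 * y 2 := by
  simp [PiLp.inner_apply, Fin.sum_univ_three, RCLike.inner_apply]
  ring

def cross (u v : Pt 3) : Pt 3 :=
  (WithLp.equiv 2 (Fin 3 → ℝ)).symm
    ![u 1 * v 2 - u 2 * v 1, u 2 * v 0 - u 0 * v 2, u 0 * v 1 - u 1 * v 0]

@[simp] lemma cross_apply0 (u v : Pt 3) : cross u v 0 = u 1 * v 2 - u 2 * v 1 := rfl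
@[simp] lemma cross_apply1 (u v : Pt 3) : cross u v 1 = u 2 * v 0 - u 0 * v 2 := rfl
@[simp] lemma cross_apply2 (u v : Pt 3) : cross u v 2 = u 0 * v 1 - u 1 * v 0 := rfl

lemma inner_cross_left (u v : Pt 3) : ⟪u, cross u v⟫ = 0 := by
  rw [inner3]; simp; ring

lemma inner_cross_right (u v : Pt 3) : ⟪v, cross u v⟫ = 0 := by
  rw [inner3]; simp; ring

lemma norm_cross_sq (u v : Pt 3) :
    ‖cross u v‖^2 = ‖u‖^2 * ‖v‖^2 - ⟪u, v⟫^2 := by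
  have h : ∀ w : Pt 3, ‖w‖^2 = ⟪w, w⟫ := fun w => (real_inner_self_eq_norm_sq w).symm
  rw [h, h, h, inner3, inner3, inner3, inner3]
  simp; ring


lemma key_identity (u v x : Pt 3) :
    ⟪cross u v, cross u v⟫ • x =
      ⟪x, cross u v⟫ • cross u v +
        (⟪cross x (cross u v), u⟫ • v - ⟪cross x (cross u v), v⟫ • u) := by
  set n := cross u v with hn
  ext i
  fin_cases i <;>
    (simp only [inner3]; simp [inner3, hn, Fin.sum_univ_three, PiLp.smul_apply, PiLp.add_apply, PiLp.sub_apply, smul_eq_mul]) <;> ring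

lemma decomp (u v x : Pt 3) (hn : cross u v ≠ 0) :
    ∃ w ∈ Submodule.span ℝ ({u, v} : Set (Pt 3)),
      x = (⟪x, cross u v⟫ / ‖cross u v‖^2) • cross u v + w := by
  set n := cross u v with hndef
  have hns : ‖n‖^2 ≠ 0 := pow_ne_zero _ (norm_ne_zero_iff.2 hn)
  have hinn : ⟪n, n⟫ = ‖n‖^2 := real_inner_self_eq_norm_sq n
  refine ⟨(‖n‖^2)⁻¹ • (⟪cross x n, u⟫ • v - ⟪cross x n, v⟫ • u), ?_, ?_⟩
  · refine Submodule.mem_span_pair.2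
      ⟨-((‖n‖^2)⁻¹ * ⟪cross x n, v⟫), (‖n‖^2)⁻¹ * ⟪cross x n, u⟫, ?_⟩
    rw [smul_sub]
    module
  · have key := key_identity u v x
    rw [hinn] at key
    calc x = (‖n‖^2)⁻¹ • ((‖n‖^2 : ℝ) • x) := by
            rw [smul_smul, inv_mul_cancel₀ hns, one_smul]
    _ = _ := by
        rw [key, smul_add, smul_smul, div_eq_inv_mul]


def uvec (A : Fin 4 → Pt 3) (j : Fin 4) : Pt 3 := A (j.succAbove 1) - A (j.succAbove 0)
def vvec (A : Fin 4 → Pt 3) (j : Fin 4) : Pt 3 := A (j.succAbove 2) - A (j.succAbove 0)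
def nvec (A : Fin 4 → Pt 3) (j : Fin 4) : Pt 3 := cross (uvec A j) (vvec A j)
def Dval (A : Fin 4 → Pt 3) (j : Fin 4) : ℝ := ⟪A j - A (j.succAbove 0), nvec A j⟫

variable {A : Fin 4 → Pt 3}

lemma facet_set_eq (j : Fin 4) :
    A '' {i | i ≠ j} =
      {A (j.succAbove 0), A (j.succAbove 1), A (j.succAbove 2)} := by
  have h1 : {i : Fin 4 | i ≠ j} = Set.range j.succAbove := by
    rw [Fin.range_succAbove]; rfl
  rw [h1, ← Set.range_comp]
  ext y
  constructor
  · rintro ⟨i, rfl⟩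
    fin_cases i <;> simp
  · rintro (rfl | rfl | rfl)
    exacts [⟨0, rfl⟩, ⟨1, rfl⟩, ⟨2, rfl⟩]

lemma facetSpan_eq (j : Fin 4) :
    facetSpan A j = (affineSpan ℝ
      ({A (j.succAbove 0), A (j.succAbove 1), A (j.succAbove 2)} : Set (Pt 3)) : Set (Pt 3)) := by
  rw [facetSpan, facet_set_eq]

lemma direction_le (j : Fin 4) :
    (affineSpan ℝ
      ({A (j.succAbove 0), A (j.succAbove 1), A (j.succAbove 2)} : Set (Pt 3))).direction ≤
      Submodule.span ℝ ({uvec A j, vvec A j} : Set (Pt 3)) := by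
  rw [direction_affineSpan,
    vectorSpan_eq_span_vsub_set_right ℝ (show A (j.succAbove 0) ∈ _ from Set.mem_insert _ _)]
  refine Submodule.span_le.2 ?_
  rintro z ⟨y, hy, rfl⟩
  rcases hy with rfl | rfl | rfl
  · simp only [vsub_eq_sub, sub_self]; exact Submodule.zero_mem _
  · exact Submodule.subset_span (Set.mem_insert _ _)
  · exact Submodule.subset_span (Set.mem_insert_of_mem _ rfl)

lemma span_le_direction (j : Fin 4) :
    Submodule.span ℝ ({uvec A j, vvec A j} : Set (Pt 3)) ≤
    (affineSpan ℝ
      ({A (j.succAbove 0), A (j.succAbove 1), A (j.succAbove 2)} : Set (Pt 3))).direction := by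
  refine Submodule.span_le.2 ?_
  rintro z (rfl | rfl)
  · rw [show uvec A j = A (j.succAbove 1) -ᵥ A (j.succAbove 0) from rfl, direction_affineSpan]
    exact vsub_mem_vectorSpan ℝ (Set.mem_insert_of_mem _ (Set.mem_insert _ _)) (Set.mem_insert _ _)
  · rw [show vvec A j = A (j.succAbove 2) -ᵥ A (j.succAbove 0) from rfl, direction_affineSpan]
    exact vsub_mem_vectorSpan ℝ
      (Set.mem_insert_of_mem _ (Set.mem_insert_of_mem _ rfl)) (Set.mem_insert _ _)

lemma inner_span_pair_eq_zero (j : Fin 4) {z : Pt 3}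
    (hz : z ∈ Submodule.span ℝ ({uvec A j, vvec A j} : Set (Pt 3))) :
    ⟪z, nvec A j⟫ = 0 := by
  obtain ⟨a, b, rfl⟩ := Submodule.mem_span_pair.1 hz
  simp only [nvec]
  rw [inner_add_left, real_inner_smul_left, real_inner_smul_left,
    inner_cross_left, inner_cross_right]
  ring

lemma nvec_ne_zero (hA : AffineIndependent ℝ A) (j : Fin 4) : nvec A j ≠ 0 := by
  intro h0
  set u := uvec A j with hu
  set v := vvec A j with hv
  have hP : AffineIndependent ℝ (A ∘ j.succAboveEmb) := hA.comp_embedding _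
  have hG : ‖u‖^2 * ‖v‖^2 - ⟪u, v⟫^2 = 0 := by
    rw [← norm_cross_sq]
    rw [show cross u v = nvec A j from rfl, h0]
    simp
  have hune : u ≠ 0 := by
    intro h
    have : A (j.succAbove 1) = A (j.succAbove 0) := by
      have := sub_eq_zero.1 h; exact this
    have h01 : (1 : Fin 3) = 0 := hP.injective this
    exact absurd h01 (by decide)
  have hvne : v ≠ 0 := by
    intro h
    have : A (j.succAbove 2) = A (j.succAbove 0) := sub_eq_zero.1 h
    have h02 : (2 : Fin 3) = 0 := hP.injective this
    exact absurd h02 (by decide)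
  have habs : ‖⟪u, v⟫‖ = ‖u‖ * ‖v‖ := by
    rw [Real.norm_eq_abs, ← Real.sqrt_sq_eq_abs,
      show ⟪u, v⟫^2 = (‖u‖ * ‖v‖)^2 by rw [mul_pow]; linarith,
      Real.sqrt_sq (by positivity)]
  obtain ⟨r, -, hr⟩ := (norm_inner_eq_norm_iff hune hvne).1 habs
  -- v = r • u
  have hmem : A (j.succAbove 2) ∈ affineSpan ℝ
      ((A ∘ j.succAboveEmb) '' (Set.univ \ {2})) := by
    have h2 : A (j.succAbove 2) = r • u +ᵥ A (j.succAbove 0) := by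
      rw [vadd_eq_add, ← hr, hv, vvec]; abel
    rw [h2]
    refine AffineSubspace.vadd_mem_of_mem_direction ?_ ?_
    · refine Submodule.smul_mem _ _ ?_
      rw [hu, show uvec A j = A (j.succAbove 1) -ᵥ A (j.succAbove 0) from rfl,
        direction_affineSpan]
      refine vsub_mem_vectorSpan ℝ ?_ ?_
      · exact ⟨1, ⟨trivial, by decide⟩, rfl⟩
      · exact ⟨0, ⟨trivial, by decide⟩, rfl⟩
    · exact subset_affineSpan ℝ _ ⟨0, ⟨trivial, by decide⟩, rfl⟩
  exact hP.notMem_affineSpan_diff 2 Set.univ hmem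


lemma infDist_facet (hA : AffineIndependent ℝ A) (j : Fin 4) (x : Pt 3) :
    Metric.infDist x (facetSpan A j) =
      |⟪x - A (j.succAbove 0), nvec A j⟫| / ‖nvec A j‖ := by
  set P0 := A (j.succAbove 0) with hP0
  set n := nvec A j with hn
  have hnne : n ≠ 0 := nvec_ne_zero hA j
  have hnorm : ‖n‖ ≠ 0 := norm_ne_zero_iff.2 hnne
  set S := affineSpan ℝ
      ({A (j.succAbove 0), A (j.succAbove 1), A (j.succAbove 2)} : Set (Pt 3)) with hS
  have hP0S : P0 ∈ S := subset_affineSpan ℝ _ (Set.mem_insert _ _)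
  obtain ⟨w, hwmem, hxw⟩ := decomp (uvec A j) (vvec A j) (x - P0) hnne
  rw [show cross (uvec A j) (vvec A j) = n from rfl] at hxw
  set t := ⟪x - P0, n⟫ / ‖n‖^2 with ht
  have htval : |t| * ‖n‖ = |⟪x - P0, n⟫| / ‖n‖ := by
    rw [ht, abs_div, abs_of_nonneg (by positivity : (0:ℝ) ≤ ‖n‖^2)]
    field_simp
  rw [facetSpan_eq, ← hS]
  have upper : Metric.infDist x (S : Set (Pt 3)) ≤ |t| * ‖n‖ := by
    have hy0 : w +ᵥ P0 ∈ (S : Set (Pt 3)) :=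
      AffineSubspace.vadd_mem_of_mem_direction (span_le_direction j hwmem) hP0S
    have hd : dist x (w +ᵥ P0) = |t| * ‖n‖ := by
      rw [dist_eq_norm, vadd_eq_add, show x - (w + P0) = t • n by
        rw [show x = (x - P0) + P0 by abel, hxw]; abel,
        norm_smul, Real.norm_eq_abs]
    rw [← hd]
    exact Metric.infDist_le_dist_of_mem hy0
  have lower : ∀ y ∈ (S : Set (Pt 3)), |t| * ‖n‖ ≤ dist x y := by
    intro y hy
    have hyd : y - P0 ∈ Submodule.span ℝ ({uvec A j, vvec A j} : Set (Pt 3)) := by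
      refine direction_le j ?_
      rw [show y - P0 = y -ᵥ P0 from rfl]
      exact AffineSubspace.vsub_mem_direction hy hP0S
    set z := w - (y - P0) with hzdef
    have hz : ⟪z, n⟫ = 0 := inner_span_pair_eq_zero j (Submodule.sub_mem _ hwmem hyd)
    have hxy : x - y = t • n + z := by
      rw [hzdef, show x - y = (x - P0) - (y - P0) by abel, hxw]; abel
    have hsq : (|t| * ‖n‖)^2 ≤ ‖x - y‖^2 := by
      have h1 : ⟪t • n, z⟫ = 0 := by
        rw [real_inner_smul_left, real_inner_comm, hz, mul_zero]
      rw [hxy, norm_add_sq_real, h1, norm_smul, Real.norm_eq_abs]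
      nlinarith [sq_nonneg ‖z‖]
    rw [dist_eq_norm]
    nlinarith [norm_nonneg (x - y), abs_nonneg t, norm_nonneg n,
      mul_nonneg (abs_nonneg t) (norm_nonneg n)]
  have hlow : |t| * ‖n‖ ≤ Metric.infDist x (S : Set (Pt 3)) := by
    rw [Metric.infDist_eq_iInf]
    have : Nonempty (S : Set (Pt 3)) := ⟨⟨P0, hP0S⟩⟩
    exact le_ciInf fun y => lower y.1 y.2
  rw [← htval]
  exact le_antisymm upper hlow


lemma inner_comb (w : Fin 4 → ℝ) (hw : ∑ i, w i = 1) (j : Fin 4) :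
    ⟪(∑ i, w i • A i) - A (j.succAbove 0), nvec A j⟫ = w j * Dval A j := by
  have hsum : (∑ i, w i • A i) - A (j.succAbove 0)
      = ∑ i, w i • (A i - A (j.succAbove 0)) := by
    simp only [smul_sub, Finset.sum_sub_distrib, ← Finset.sum_smul, hw, one_smul]
  rw [hsum, sum_inner, Fin.sum_univ_succAbove _ j, real_inner_smul_left]
  have hz0 : ⟪w (j.succAbove 0) • (A (j.succAbove 0) - A (j.succAbove 0)), nvec A j⟫ = 0 := by
    rw [sub_self, smul_zero, inner_zero_left]
  have hz1 : ⟪w (j.succAbove 1) • (A (j.succAbove 1) - A (j.succAbove 0)), nvec A j⟫ = 0 := by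
    rw [real_inner_smul_left, show A (j.succAbove 1) - A (j.succAbove 0) = uvec A j from rfl,
      show nvec A j = cross (uvec A j) (vvec A j) from rfl, inner_cross_left, mul_zero]
  have hz2 : ⟪w (j.succAbove 2) • (A (j.succAbove 2) - A (j.succAbove 0)), nvec A j⟫ = 0 := by
    rw [real_inner_smul_left, show A (j.succAbove 2) - A (j.succAbove 0) = vvec A j from rfl,
      show nvec A j = cross (uvec A j) (vvec A j) from rfl, inner_cross_right, mul_zero]
  rw [Fin.sum_univ_three, hz0, hz1, hz2, Dval]
  ring

lemma facetArea_eq (j : Fin 4) : facetArea A j = ‖nvec A j‖ / 2 := by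
  set u := uvec A j with hu
  set v := vvec A j with hv
  have ha : dist (A (j.succAbove 0)) (A (j.succAbove 1)) = ‖u‖ := by
    rw [dist_eq_norm, norm_sub_rev]; rfl
  have hb : dist (A (j.succAbove 0)) (A (j.succAbove 2)) = ‖v‖ := by
    rw [dist_eq_norm, norm_sub_rev]; rfl
  have hc : dist (A (j.succAbove 1)) (A (j.succAbove 2)) = ‖u - v‖ := by
    rw [dist_eq_norm]
    congr 1
    rw [hu, hv, uvec, vvec]; abel
  have h3 : ‖u - v‖^2 = ‖u‖^2 - 2*⟪u,v⟫ + ‖v‖^2 := norm_sub_sq_real u v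
  have hprod : (‖u‖ + ‖v‖ + ‖u - v‖) * (-‖u‖ + ‖v‖ + ‖u - v‖) *
      (‖u‖ - ‖v‖ + ‖u - v‖) * (‖u‖ + ‖v‖ - ‖u - v‖)
      = 4 * ‖nvec A j‖^2 := by
    rw [show nvec A j = cross u v from rfl, norm_cross_sq]
    linear_combination (‖u‖^2 + ‖v‖^2 + 2*⟪u,v⟫ - ‖u - v‖^2) * h3
  rw [facetArea, ha, hb, hc, heronArea, hprod,
    show (4:ℝ) * ‖nvec A j‖^2 = (2 * ‖nvec A j‖)^2 by ring,
    Real.sqrt_sq (by positivity)]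
  ring

lemma Dval_ne_zero (hA : AffineIndependent ℝ A) (j : Fin 4) : Dval A j ≠ 0 := by
  intro h0
  have hnne : nvec A j ≠ 0 := nvec_ne_zero hA j
  obtain ⟨w, hwmem, hxw⟩ :=
    decomp (uvec A j) (vvec A j) (A j - A (j.succAbove 0)) hnne
  rw [show cross (uvec A j) (vvec A j) = nvec A j from rfl] at hxw
  rw [show ⟪A j - A (j.succAbove 0), nvec A j⟫ = Dval A j from rfl, h0, zero_div,
    zero_smul, zero_add] at hxw
  have hmem : A j ∈ affineSpan ℝ (A '' (Set.univ \ {j})) := by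
    have hset : A '' (Set.univ \ {j}) = A '' {i | i ≠ j} := by
      ext i; simp
    rw [hset, facet_set_eq]
    have hAj : A j = w +ᵥ A (j.succAbove 0) := by rw [vadd_eq_add, ← hxw]; abel
    rw [hAj]
    exact AffineSubspace.vadd_mem_of_mem_direction (span_le_direction j hwmem)
      (subset_affineSpan ℝ _ (Set.mem_insert _ _))
  exact hA.notMem_affineSpan_diff j Set.univ hmem


def Eform (a b c d : Pt 3) : ℝ := ⟪a - b, cross (c - b) (d - b)⟫

lemma Dsym (x0 x1 x2 x3 : Pt 3) :
    Eform x0 x1 x2 x3 = - Eform x1 x0 x2 x3 ∧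
    Eform x2 x0 x1 x3 = - Eform x1 x0 x2 x3 ∧
    Eform x3 x0 x1 x2 = Eform x1 x0 x2 x3 := by
  unfold Eform
  refine ⟨?_, ?_, ?_⟩ <;>
    (rw [inner3, inner3]; simp only [PiLp.sub_apply, cross_apply0, cross_apply1, cross_apply2];
      ring)

lemma Dval_abs_eq (j k : Fin 4) : |Dval A j| = |Dval A k| := by
  obtain ⟨h1, h2, h3⟩ := Dsym (A 0) (A 1) (A 2) (A 3)
  have key : ∀ i : Fin 4, |Dval A i| = |Eform (A 1) (A 0) (A 2) (A 3)| := by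
    intro i
    fin_cases i
    · show |Dval A 0| = _
      rw [show Dval A 0 = Eform (A 0) (A 1) (A 2) (A 3) from rfl, h1, abs_neg]
    · show |Dval A 1| = _
      rw [show Dval A 1 = Eform (A 1) (A 0) (A 2) (A 3) from rfl]
    · show |Dval A 2| = _
      rw [show Dval A 2 = Eform (A 2) (A 0) (A 1) (A 3) from rfl, h2, abs_neg]
    · show |Dval A 3| = _
      rw [show Dval A 3 = Eform (A 3) (A 0) (A 1) (A 2) from rfl, h3]
  rw [key j, key k]


def bas (A : Fin 4 → Pt 3) (hA : AffineIndependent ℝ A) : AffineBasis (Fin 4) ℝ (Pt 3) :=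
  ⟨A, hA, by
    rw [hA.affineSpan_eq_top_iff_card_eq_finrank_add_one]
    simp [finrank_euclideanSpace_fin]⟩

lemma coord_eq (hA : AffineIndependent ℝ A) (w : Fin 4 → ℝ) (hw : ∑ i, w i = 1) (i : Fin 4) :
    (bas A hA).coord i (∑ k, w k • A k) = w i := by
  have h : (∑ k, w k • A k) = Finset.univ.affineCombination ℝ (bas A hA) w := by
    rw [Finset.univ.affineCombination_eq_linear_combination _ _ hw]; rfl
  rw [h, AffineBasis.coord_apply_combination_of_mem _ (Finset.mem_univ i) hw]

end Stmt2Aux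

open Stmt2Aux in
/-- Theorem 2.3. For a tetrahedron `T = [A 0, A 1, A 2, A 3]`
with `J` the complementary 1-centroid (the average of the vertices weighted by
the perimeters of the opposite facets), the incenter of `T` coincides with `J`
iff the inradii of the four triangular facets are all equal. -/
theorem statement2 (A : Fin 4 → Pt 3) (hA : AffineIndependent ℝ A)
    (J : Pt 3)
    (hJ : J = (facetPerimeter A 0 + facetPerimeter A 1 +
        facetPerimeter A 2 + facetPerimeter A 3)⁻¹ •
        (facetPerimeter A 0 • A 0 + facetPerimeter A 1 • A 1 +
          facetPerimeter A 2 • A 2 + facetPerimeter A 3 • A 3)) :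
    IsIncenter A J ↔ ∀ j k, facetInradius A j = facetInradius A k := by
  classical
  have hd : ∀ (j : Fin 4) (a c : Fin 3), a ≠ c →
      0 < dist (A (j.succAbove a)) (A (j.succAbove c)) := by
    intro j a c hac
    rw [dist_pos]
    exact fun h => hac (Fin.succAbove_right_injective (hA.injective h))
  have hp : ∀ j, 0 < facetPerimeter A j := by
    intro j
    have h1 := hd j 0 1 (by decide)
    have h2 := hd j 0 2 (by decide)
    have h3 := hd j 1 2 (by decide)
    unfold facetPerimeter
    linarith
  set p : Fin 4 → ℝ := facetPerimeter A with hpdef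
  set σ : ℝ := p 0 + p 1 + p 2 + p 3 with hσdef
  have hσ : 0 < σ := by
    rw [hσdef]
    linarith [hp 0, hp 1, hp 2, hp 3]
  set w : Fin 4 → ℝ := fun i => p i / σ with hwdef
  have hw1 : ∑ i, w i = 1 := by
    rw [Fin.sum_univ_four]
    simp only [hwdef]
    field_simp
    exact hσdef.symm
  have hJw : J = ∑ i, w i • A i := by
    rw [hJ, Fin.sum_univ_four]
    rw [smul_add, smul_add, smul_add, smul_smul, smul_smul, smul_smul, smul_smul]
    simp only [hwdef, div_eq_inv_mul]
  have hcpos : ∀ i, 0 < w i := fun i => div_pos (hp i) hσ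
  have hc : ∀ i, (bas A hA).coord i J = w i := by
    intro i; rw [hJw]; exact coord_eq hA w hw1 i
  have hInt : J ∈ interior (convexHull ℝ (Set.range A)) := by
    have hr : Set.range A = Set.range ⇑(bas A hA) := rfl
    rw [hr, (bas A hA).interior_convexHull]
    intro i
    rw [hc i]
    exact hcpos i
  have hDist : ∀ j, Metric.infDist J (facetSpan A j)
      = w j * (|Dval A j| / ‖nvec A j‖) := by
    intro j
    rw [hJw, infDist_facet hA j, inner_comb w hw1 j, abs_mul,
      abs_of_pos (hcpos j), mul_div_assoc]
  have hnp : ∀ j, 0 < ‖nvec A j‖ := fun j => norm_pos_iff.2 (nvec_ne_zero hA j)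
  have hDp : ∀ j, 0 < |Dval A j| := fun j => abs_pos.2 (Dval_ne_zero hA j)
  have hir : ∀ j, facetInradius A j = ‖nvec A j‖ / p j := by
    intro j
    unfold facetInradius
    rw [facetArea_eq]
    show 2 * (‖nvec A j‖ / 2) / facetPerimeter A j = _
    rw [← hpdef]
    ring
  constructor
  · rintro ⟨-, r, hr⟩ j k
    have hj := hr j
    have hk := hr k
    rw [hDist j] at hj
    rw [hDist k] at hk
    have hm : |Dval A k| = |Dval A j| := Dval_abs_eq k j
    rw [hir j, hir k]
    have hrpos : 0 < r := hj ▸ mul_pos (hcpos j) (div_pos (hDp j) (hnp j))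
    have hj' : ‖nvec A j‖ = w j * |Dval A j| / r := by
      rw [eq_div_iff (ne_of_gt hrpos), ← hj]
      field_simp [ne_of_gt (hnp j)]
    have hk' : ‖nvec A k‖ = w k * |Dval A k| / r := by
      rw [eq_div_iff (ne_of_gt hrpos), ← hk]
      field_simp [ne_of_gt (hnp k)]
    rw [hj', hk', hm]
    simp only [hwdef]
    have := (hp j); have := (hp k)
    field_simp
  · intro hrr
    refine ⟨hInt, w 0 * (|Dval A 0| / ‖nvec A 0‖), fun j => ?_⟩
    rw [hDist j]
    have hm : |Dval A j| = |Dval A 0| := Dval_abs_eq j 0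
    have h0 := hrr j 0
    rw [hir j, hir 0] at h0
    have hq : ‖nvec A j‖ * p 0 = ‖nvec A 0‖ * p j :=
      (div_eq_div_iff (ne_of_gt (hp j)) (ne_of_gt (hp 0))).1 h0
    rw [hm]
    simp only [hwdef]
    have h1 := hnp j; have h2 := hnp 0; have h3 := hp j; have h4 := hp 0
    field_simp
    linear_combination (-|Dval A 0|) * hq
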